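/- Let k have characteristic zero and R = k[x,y,z]. The algebra R/(x^3, y^3, z^3, xyz), which is a level artinian monomial almost complete intersection with h-vector (1,3,6,6,3), fails the Weak Lefschetz Property: for every linear form ℓ, the map ×ℓ : [R/I]_2 → [R/I]_3 is not bijective (hence not of maximal rank since both spaces are 6-dimensional). -/

import Mathlib

open MvPolynomial

/-- The dimension of the degree-`i` component of the graded algebra `R/I`, where
`R = k[x_1,...,x_r]` is standard graded: it is the image of the space of homogeneous
polynomials of degree `i` in the quotient. -/
noncomputable def hilb {k : Type*} [Field k] {σ : Type*} (I : Ideal (MvPolynomial σ k))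
    (i : ℕ) : ℕ :=
  Module.finrank k ((homogeneousSubmodule σ k i).map (Ideal.Quotient.mkₐ k I).toLinearMap)

/-- Injectivity of the multiplication map `×f : [R/I]_i → [R/I]_{i + deg f}`. -/
def mulInj {k : Type*} [Field k] {σ : Type*} (I : Ideal (MvPolynomial σ k))
    (f : MvPolynomial σ k) (i : ℕ) : Prop :=
  ∀ g ∈ homogeneousSubmodule σ k i, f * g ∈ I → g ∈ I

/-- Surjectivity of the multiplication map `×f : [R/I]_i → [R/I]_j` (with `j = i + deg f`). -/
def mulSurj {k : Type*} [Field k] {σ : Type*} (I : Ideal (MvPolynomial σ k))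
    (f : MvPolynomial σ k) (i j : ℕ) : Prop :=
  ∀ g ∈ homogeneousSubmodule σ k j, ∃ h ∈ homogeneousSubmodule σ k i, g - f * h ∈ I

lemma finsupp3_ext_iff (s t : Fin 3 →₀ ℕ) : s = t ↔ s 0 = t 0 ∧ s 1 = t 1 ∧ s 2 = t 2 := by
  constructor
  · rintro rfl; exact ⟨rfl, rfl, rfl⟩
  · rintro ⟨h0, h1, h2⟩
    ext i; fin_cases i <;> assumption

lemma degree_fin3 (d : Fin 3 →₀ ℕ) : d.degree = d 0 + d 1 + d 2 := by
  rw [Finsupp.degree_apply, Finset.sum_subset (Finset.subset_univ _)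
      (fun i _ hi => Finsupp.notMem_support_iff.mp hi)]
  simp [Fin.sum_univ_three]

lemma X_eq_mono {k : Type*} [CommSemiring k] (i : Fin 3) :
    (X i : MvPolynomial (Fin 3) k) = monomial (Finsupp.single i 1) 1 := by
  rw [← pow_one (X i), X_pow_eq_monomial]

lemma xyz_eq_monomial {k : Type*} [CommSemiring k] :
    (X 0 * X 1 * X 2 : MvPolynomial (Fin 3) k)
      = monomial (Finsupp.single 0 1 + Finsupp.single 1 1 + Finsupp.single 2 1) 1 := by
  rw [X_eq_mono, X_eq_mono, X_eq_mono, monomial_mul, monomial_mul, mul_one, mul_one]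

lemma XX_eq_monomial {k : Type*} [CommSemiring k] (i j : Fin 3) :
    (X i * X j : MvPolynomial (Fin 3) k)
      = monomial (Finsupp.single i 1 + Finsupp.single j 1) 1 := by
  rw [X_eq_mono, X_eq_mono, monomial_mul, mul_one]

/-- Key vanishing lemma: any element of `I` has zero coefficient at a monomial not divisible
by any of the four generators. -/
lemma coeff_zero_of_memI {k : Type*} [Field k] {p : MvPolynomial (Fin 3) k}
    (hp : p ∈ Ideal.span {(X 0 : MvPolynomial (Fin 3) k) ^ 3, (X 1 : MvPolynomial (Fin 3) k) ^ 3,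
      (X 2 : MvPolynomial (Fin 3) k) ^ 3, X 0 * X 1 * X 2})
    (m : Fin 3 →₀ ℕ) (h0 : m 0 < 3) (h1 : m 1 < 3) (h2 : m 2 < 3)
    (hz : m 0 = 0 ∨ m 1 = 0 ∨ m 2 = 0) : MvPolynomial.coeff m p = 0 := by
  revert m
  refine Submodule.span_induction
    (p := fun x _ => ∀ m : Fin 3 →₀ ℕ, m 0 < 3 → m 1 < 3 → m 2 < 3 →
      (m 0 = 0 ∨ m 1 = 0 ∨ m 2 = 0) → MvPolynomial.coeff m x = 0)
    ?_ ?_ ?_ ?_ hp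
  · rintro x (rfl | rfl | rfl | rfl) m h0 h1 h2 hz
    · rw [X_pow_eq_monomial, coeff_monomial, if_neg]
      simp only [finsupp3_ext_iff, Finsupp.single_apply]
      simp only [Fin.isValue, if_true, if_neg (by decide : ¬(0 : Fin 3) = 1),
        if_neg (by decide : ¬(0 : Fin 3) = 2)]
      omega
    · rw [X_pow_eq_monomial, coeff_monomial, if_neg]
      simp only [finsupp3_ext_iff, Finsupp.single_apply]
      simp only [Fin.isValue, if_true, if_neg (by decide : ¬(1 : Fin 3) = 0),
        if_neg (by decide : ¬(1 : Fin 3) = 2)]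
      omega
    · rw [X_pow_eq_monomial, coeff_monomial, if_neg]
      simp only [finsupp3_ext_iff, Finsupp.single_apply]
      simp only [Fin.isValue, if_true, if_neg (by decide : ¬(2 : Fin 3) = 0),
        if_neg (by decide : ¬(2 : Fin 3) = 1)]
      omega
    · rw [xyz_eq_monomial, coeff_monomial, if_neg]
      simp only [finsupp3_ext_iff, Finsupp.add_apply, Finsupp.single_apply]
      simp only [Fin.isValue, if_true, if_neg (by decide : ¬(0 : Fin 3) = 1),
        if_neg (by decide : ¬(0 : Fin 3) = 2), if_neg (by decide : ¬(1 : Fin 3) = 0),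
        if_neg (by decide : ¬(1 : Fin 3) = 2), if_neg (by decide : ¬(2 : Fin 3) = 0),
        if_neg (by decide : ¬(2 : Fin 3) = 1)]
      omega
  · intro m _ _ _ _; simp
  · intro x y _ _ hx hy m h0 h1 h2 hz
    rw [coeff_add, hx m h0 h1 h2 hz, hy m h0 h1 h2 hz, add_zero]
  · intro r x _ hx m h0 h1 h2 hz
    rw [smul_eq_mul, coeff_mul]
    refine Finset.sum_eq_zero fun uv huv => ?_
    rw [Finset.HasAntidiagonal.mem_antidiagonal] at huv
    have e0 : uv.1 0 + uv.2 0 = m 0 := by rw [← huv]; rfl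
    have e1 : uv.1 1 + uv.2 1 = m 1 := by rw [← huv]; rfl
    have e2 : uv.1 2 + uv.2 2 = m 2 := by rw [← huv]; rfl
    rw [hx uv.2 (by omega) (by omega) (by omega) (by omega), mul_zero]

/-- Decomposition of a homogeneous degree-1 polynomial in three variables. -/
lemma lin_decomp {k : Type*} [CommSemiring k] {ℓ : MvPolynomial (Fin 3) k}
    (h : ℓ.IsHomogeneous 1) :
    ℓ = C (coeff (Finsupp.single 0 1) ℓ) * X 0 + C (coeff (Finsupp.single 1 1) ℓ) * X 1
        + C (coeff (Finsupp.single 2 1) ℓ) * X 2 := by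
  ext m
  simp only [coeff_add, coeff_C_mul, coeff_X']
  by_cases hm0 : Finsupp.single (0 : Fin 3) 1 = m
  · subst hm0
    rw [if_pos rfl, if_neg, if_neg] <;>
      simp [finsupp3_ext_iff, Finsupp.single_apply]
  by_cases hm1 : Finsupp.single (1 : Fin 3) 1 = m
  · subst hm1
    rw [if_pos rfl, if_neg hm0, if_neg] <;>
      simp [finsupp3_ext_iff, Finsupp.single_apply]
  by_cases hm2 : Finsupp.single (2 : Fin 3) 1 = m
  · subst hm2
    rw [if_pos rfl, if_neg hm0, if_neg hm1]
    simp
  · rw [if_neg hm0, if_neg hm1, if_neg hm2]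
    simp only [mul_zero, add_zero]
    refine h.coeff_eq_zero ?_
    rw [degree_fin3]
    intro hdeg
    simp only [finsupp3_ext_iff, Finsupp.single_apply] at hm0 hm1 hm2
    simp only [Fin.isValue, if_true, if_neg (by decide : ¬(0 : Fin 3) = 1),
      if_neg (by decide : ¬(0 : Fin 3) = 2), if_neg (by decide : ¬(1 : Fin 3) = 0),
      if_neg (by decide : ¬(1 : Fin 3) = 2), if_neg (by decide : ¬(2 : Fin 3) = 0),
      if_neg (by decide : ¬(2 : Fin 3) = 1)] at hm0 hm1 hm2
    omega

/-- Brenner–Kaid: `k[x,y,z]/(x^3,y^3,z^3,xyz)` (char 0) fails the WLP: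
for every linear form `ℓ`, the map `×ℓ : [R/I]_2 → [R/I]_3` is not bijective. -/
theorem stmt8 (k : Type*) [Field k] [CharZero k] (I : Ideal (MvPolynomial (Fin 3) k))
    (hI : I = Ideal.span {(X 0 : MvPolynomial (Fin 3) k) ^ 3, (X 1 : MvPolynomial (Fin 3) k) ^ 3,
      (X 2 : MvPolynomial (Fin 3) k) ^ 3, X 0 * X 1 * X 2}) :
    ∀ ℓ ∈ homogeneousSubmodule (Fin 3) k 1, ¬ (mulInj I ℓ 2 ∧ mulSurj I ℓ 2 3) := by
  intro ℓ hℓ ⟨hinj, _⟩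
  rw [mem_homogeneousSubmodule] at hℓ
  obtain ⟨a, b, c, hdec⟩ : ∃ a b c : k, ℓ = C a * X 0 + C b * X 1 + C c * X 2 :=
    ⟨_, _, _, lin_decomp hℓ⟩
  -- the kernel element
  set g : MvPolynomial (Fin 3) k :=
    C a ^ 2 * X 0 ^ 2 + C b ^ 2 * X 1 ^ 2 + C c ^ 2 * X 2 ^ 2
      - (C a * C b) * (X 0 * X 1) - (C a * C c) * (X 0 * X 2)
      - (C b * C c) * (X 1 * X 2) with hg_def
  by_cases habc : a = 0 ∧ b = 0 ∧ c = 0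
  · -- ℓ = 0, so injectivity fails with g = X 0 ^ 2
    obtain ⟨rfl, rfl, rfl⟩ := habc
    have hℓ0 : ℓ = 0 := by rw [hdec]; simp
    have hmem : (X 0 : MvPolynomial (Fin 3) k) ^ 2 ∈ I := by
      apply hinj _ ((isHomogeneous_X k 0).pow 2)
      rw [hℓ0, zero_mul]; exact I.zero_mem
    rw [hI] at hmem
    have := coeff_zero_of_memI hmem (Finsupp.single 0 2)
      (by simp [Finsupp.single_apply]) (by simp [Finsupp.single_apply])
      (by simp [Finsupp.single_apply]) (by simp [Finsupp.single_apply])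
    rw [X_pow_eq_monomial, coeff_monomial, if_pos rfl] at this
    exact one_ne_zero this
  · -- ℓ ≠ 0: g is a nonzero kernel element
    have hg2 : g ∈ homogeneousSubmodule (Fin 3) k 2 := by
      rw [mem_homogeneousSubmodule, hg_def]
      have hx2 : ∀ i : Fin 3, ((X i : MvPolynomial (Fin 3) k) ^ 2).IsHomogeneous 2 :=
        fun i => (isHomogeneous_X k i).pow 2
      have hC : ∀ r : k, ((C r : MvPolynomial (Fin 3) k) ^ 2).IsHomogeneous 0 :=
        fun r => by simpa using (isHomogeneous_C _ r).pow 2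
      have hCC : ∀ r s : k, ((C r * C s : MvPolynomial (Fin 3) k)).IsHomogeneous 0 :=
        fun r s => by simpa using (isHomogeneous_C _ r).mul (isHomogeneous_C _ s)
      have hXX : ∀ i j : Fin 3, ((X i * X j : MvPolynomial (Fin 3) k)).IsHomogeneous 2 :=
        fun i j => (isHomogeneous_X k i).mul (isHomogeneous_X k j)
      have t1 := ((hC a).mul (hx2 0)).add (((hC b).mul (hx2 1)).add ((hC c).mul (hx2 2)))
      have t2 := ((hCC a b).mul (hXX 0 1)).add
        (((hCC a c).mul (hXX 0 2)).add ((hCC b c).mul (hXX 1 2)))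
      simpa [sub_sub, add_assoc, zero_add] using t1.sub t2
    have hlg : ℓ * g ∈ I := by
      have heq : ℓ * g = C a ^ 3 * (X 0 ^ 3) + C b ^ 3 * (X 1 ^ 3) + C c ^ 3 * (X 2 ^ 3)
          + (-(3 * (C a * C b * C c))) * (X 0 * X 1 * X 2) := by
        rw [hdec, hg_def]; ring
      rw [heq, hI]
      refine Ideal.add_mem _ (Ideal.add_mem _ (Ideal.add_mem _ ?_ ?_) ?_) ?_ <;>
        exact Ideal.mul_mem_left _ _ (Ideal.subset_span (by simp))
    have hgI : g ∈ I := hinj g hg2 hlg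
    rw [hI] at hgI
    -- now derive a contradiction from the nonzero coefficient of g
    have key : ∀ i : Fin 3, coeff (Finsupp.single i 2) g = 0 := by
      intro i
      apply coeff_zero_of_memI hgI <;> fin_cases i <;>
        simp [Finsupp.single_apply]
    rcases not_and_or.mp habc with ha | hbc
    · have := key 0
      rw [hg_def] at this
      simp only [coeff_sub, coeff_add, ← C_mul, ← C_pow, coeff_C_mul, X_pow_eq_monomial,
        XX_eq_monomial, coeff_monomial, finsupp3_ext_iff, Finsupp.add_apply,
        Finsupp.single_apply] at this
      norm_num at this
      simp (config := { decide := true }) only [] at this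
      norm_num at this
      exact ha this
    rcases not_and_or.mp hbc with hb | hc
    · have := key 1
      rw [hg_def] at this
      simp only [coeff_sub, coeff_add, ← C_mul, ← C_pow, coeff_C_mul, X_pow_eq_monomial,
        XX_eq_monomial, coeff_monomial, finsupp3_ext_iff, Finsupp.add_apply,
        Finsupp.single_apply] at this
      norm_num at this
      simp (config := { decide := true }) only [] at this
      norm_num at this
      exact hb this
    · have := key 2
      rw [hg_def] at this
      simp only [coeff_sub, coeff_add, ← C_mul, ← C_pow, coeff_C_mul, X_pow_eq_monomial,
        XX_eq_monomial, coeff_monomial, finsupp3_ext_iff, Finsupp.add_apply,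
        Finsupp.single_apply] at this
      norm_num at this
      simp (config := { decide := true }) only [] at this
      norm_num at this
      exact hc this
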